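/- Let R be a ring satisfying (SR_r) and let C be a right R-module such that C ⊕ R^k ≅ R^n as right R-modules, with k ≤ n - r + 1. Then C ≅ R^{n-k}. -/

import Mathlib

open Matrix

/-- A vector `v ∈ Rⁿ` is *unimodular* if some homomorphism of right `R`-modules
`φ : Rⁿ → R` sends it to `1`.  Right `R`-modules are encoded as modules over `Rᵐᵒᵖ`. -/
def IsUnimodular {n : ℕ} (R : Type) [Ring R] (v : Fin n → R) : Prop :=
  ∃ φ : (Fin n → R) →ₗ[Rᵐᵒᵖ] R, φ v = 1

/-- Bass's stable rank condition `(SR_r)`: for all `n ≥ r` and every unimodular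
`(c₁, …, cₙ) ∈ Rⁿ` there are `b₁, …, b_{n-1} ∈ R` such that
`(c₁ + b₁ cₙ, …, c_{n-1} + b_{n-1} cₙ)` is unimodular. -/
def SatisfiesSR (R : Type) [Ring R] (r : ℕ) : Prop :=
  ∀ n : ℕ, r ≤ n + 1 → ∀ c : Fin (n + 1) → R, IsUnimodular R c →
    ∃ b : Fin n → R,
      IsUnimodular R (fun i : Fin n => c i.castSucc + b i * c (Fin.last n))

/-- An elementary matrix differs from the identity at exactly one off-diagonal entry. -/
def IsElementaryMatrix {R : Type} [Ring R] {n : ℕ} (A : Matrix (Fin n) (Fin n) R) : Prop :=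
  ∃ i j : Fin n, i ≠ j ∧ ∃ x : R, A = 1 + Matrix.single i j x

/-- `EL_n(R)`: the subgroup of `GL_n(R)` generated by the elementary matrices. -/
def ElementarySubgroup (R : Type) [Ring R] (n : ℕ) : Subgroup ((Matrix (Fin n) (Fin n) R)ˣ) :=
  Subgroup.closure {M : (Matrix (Fin n) (Fin n) R)ˣ | IsElementaryMatrix M.val}

section Aux

variable {S : Type*} [Ring S] {A B : Type*} [AddCommGroup A] [AddCommGroup B]
  [Module S A] [Module S B]

/-- Shear on the first factor: `(a, b) ↦ (a + f b, b)`. -/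
def shearFst (f : B →ₗ[S] A) : (A × B) ≃ₗ[S] (A × B) where
  toFun x := (x.1 + f x.2, x.2)
  invFun x := (x.1 - f x.2, x.2)
  map_add' x y := by ext <;> simp <;> abel
  map_smul' c x := by ext <;> simp
  left_inv x := by ext <;> simp
  right_inv x := by ext <;> simp

/-- Shear on the second factor: `(a, b) ↦ (a, b + f a)`. -/
def shearSnd (f : A →ₗ[S] B) : (A × B) ≃ₗ[S] (A × B) where
  toFun x := (x.1, x.2 + f x.1)
  invFun x := (x.1, x.2 - f x.1)
  map_add' x y := by ext <;> simp <;> abel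
  map_smul' c x := by ext <;> simp
  left_inv x := by ext <;> simp
  right_inv x := by ext <;> simp

@[simp] theorem shearFst_apply (f : B →ₗ[S] A) (x : A × B) :
    shearFst f x = (x.1 + f x.2, x.2) := rfl

@[simp] theorem shearSnd_apply (f : A →ₗ[S] B) (x : A × B) :
    shearSnd f x = (x.1, x.2 + f x.1) := rfl

variable (R : Type) [Ring R]

/-- Left multiplication by a fixed element is `Rᵐᵒᵖ`-linear. -/
def leftMulLinear (a : R) : R →ₗ[Rᵐᵒᵖ] R where
  toFun x := a * x
  map_add' := mul_add a
  map_smul' c x := by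
    simp [MulOpposite.smul_eq_mul_unop, mul_assoc]

@[simp] theorem leftMulLinear_apply (a x : R) : leftMulLinear R a x = a * x := rfl

/-- `s ↦ (b₁ s, …, bₘ s)` is `Rᵐᵒᵖ`-linear. -/
def bMulLinear {m : ℕ} (b : Fin m → R) : R →ₗ[Rᵐᵒᵖ] (Fin m → R) where
  toFun s := fun i => b i * s
  map_add' x y := by funext i; simp [mul_add]
  map_smul' c x := by
    funext i
    simp [MulOpposite.smul_eq_mul_unop, mul_assoc]

@[simp] theorem bMulLinear_apply {m : ℕ} (b : Fin m → R) (s : R) (i : Fin m) :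
    bMulLinear R b s i = b i * s := rfl

/-- The `snoc` linear equivalence `R^{m+1} ≃ R^m × R` for right `R`-modules. -/
def snocLinearEquiv (m : ℕ) : (Fin (m + 1) → R) ≃ₗ[Rᵐᵒᵖ] (Fin m → R) × R where
  toFun v := (fun i => v i.castSucc, v (Fin.last m))
  invFun p := Fin.snoc p.1 p.2
  map_add' _ _ := rfl
  map_smul' _ _ := rfl
  left_inv v := by
    funext i
    refine Fin.lastCases ?_ ?_ i <;> simp
  right_inv p := by
    ext <;> simp

/-- Cancel a free rank-one factor from a linear equivalence of right modules that
fixes `(0, 1)`. -/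
noncomputable def prodCancel {P Q : Type*} [AddCommGroup P] [AddCommGroup Q]
    [Module Rᵐᵒᵖ P] [Module Rᵐᵒᵖ Q]
    (f : (P × R) ≃ₗ[Rᵐᵒᵖ] (Q × R)) (hf : f (0, 1) = (0, 1)) : P ≃ₗ[Rᵐᵒᵖ] Q := by
  have h0 : ∀ s : R, f (0, s) = (0, s) := by
    intro s
    have : ((0 : P), s) = (MulOpposite.op s) • ((0 : P), (1 : R)) := by
      ext <;> simp [op_smul_eq_mul]
    rw [this, _root_.map_smul, hf]
    ext <;> simp [op_smul_eq_mul]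
  have h0' : ∀ s : R, f.symm (0, s) = (0, s) := by
    intro s
    rw [← h0 s, f.symm_apply_apply]
  have key : ∀ p : P, f.symm ((f (p, 0)).1, 0) = (p, -(f (p, 0)).2) := by
    intro p
    have h1 : ((f (p, 0)).1, (0 : R)) = f (p, 0) - (0, (f (p, 0)).2) := by
      ext <;> simp
    rw [h1, map_sub, f.symm_apply_apply, h0']
    ext <;> simp
  have key' : ∀ q : Q, f ((f.symm (q, 0)).1, 0) = (q, -(f.symm (q, 0)).2) := by
    intro q
    have h1 : ((f.symm (q, 0)).1, (0 : R)) = f.symm (q, 0) - (0, (f.symm (q, 0)).2) := by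
      ext <;> simp
    rw [h1, map_sub, f.apply_symm_apply, h0]
    ext <;> simp
  exact
    { toFun := fun p => (f (p, 0)).1
      invFun := fun q => (f.symm (q, 0)).1
      map_add' := fun p p' => by
        have h1 : ((p + p' : P), (0 : R)) = (p, 0) + (p', 0) := by ext <;> simp
        show (f (p + p', 0)).1 = (f (p, 0)).1 + (f (p', 0)).1
        rw [h1, map_add]; rfl
      map_smul' := fun c p => by
        have h1 : (c • p, (0 : R)) = c • ((p : P), (0 : R)) := by ext <;> simp
        show (f (c • p, 0)).1 = c • (f (p, 0)).1
        rw [h1, _root_.map_smul]; rfl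
      left_inv := fun p => by
        show (f.symm ((f (p, 0)).1, 0)).1 = p
        rw [key p]
      right_inv := fun q => by
        show (f ((f.symm (q, 0)).1, 0)).1 = q
        rw [key' q] }

/-- The trivial factor `R⁰` can be dropped. -/
def prodEmpty (C : Type*) [AddCommGroup C] [Module Rᵐᵒᵖ C] :
    (C × (Fin 0 → R)) ≃ₗ[Rᵐᵒᵖ] C where
  toFun := Prod.fst
  invFun c := (c, 0)
  map_add' _ _ := rfl
  map_smul' _ _ := rfl
  left_inv x := by
    ext
    · rfl
    · exact (Fin.elim0 ‹Fin 0›)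
  right_inv _ := rfl

/-- Main induction: peeling off one free factor at a time. -/
theorem stablyFree_aux (r : ℕ) (hSR : SatisfiesSR R r) (k : ℕ) :
    ∀ (n : ℕ) (C : Type) [AddCommGroup C] [Module Rᵐᵒᵖ C],
      (k : ℤ) ≤ (n : ℤ) - (r : ℤ) + 1 →
      ((C × (Fin k → R)) ≃ₗ[Rᵐᵒᵖ] (Fin n → R)) →
      Nonempty (C ≃ₗ[Rᵐᵒᵖ] (Fin (n - k) → R)) := by
  induction k with
  | zero =>
    intro n C _ _ _ e
    exact ⟨((prodEmpty R C).symm.trans e)⟩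
  | succ k ih =>
    intro n C _ _ hk e
    match n, e with
    | 0, e =>
      -- the ring is trivial
      haveI hR : Subsingleton R := by
        constructor
        intro a a'
        have h := e.injective (Subsingleton.elim (e (0, fun _ => a)) (e (0, fun _ => a')))
        exact congrFun (congrArg Prod.snd h) 0
      haveI hC : Subsingleton C := by
        constructor
        intro c c'
        have := e.injective (Subsingleton.elim (e (c, 0)) (e (c', 0)))
        exact congrArg Prod.fst this
      refine ⟨LinearEquiv.ofLinear 0 0 ?_ ?_⟩
      · apply LinearMap.ext; intro x; exact Subsingleton.elim _ _
      · apply LinearMap.ext; intro x; exact Subsingleton.elim _ _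
    | (m + 1), e =>
      have hrm : r ≤ m + 1 := by omega
      -- rearrange `e` into an equivalence `(C × R^k) × R ≃ R^m × R`
      set E : ((C × (Fin k → R)) × R) ≃ₗ[Rᵐᵒᵖ] ((Fin m → R) × R) :=
        ((LinearEquiv.prodAssoc Rᵐᵒᵖ C (Fin k → R) R).trans
          (((LinearEquiv.refl Rᵐᵒᵖ C).prodCongr (snocLinearEquiv R k).symm).trans
            (e.trans (snocLinearEquiv R m)))) with hE
      set v : (Fin m → R) × R := E (0, 1) with hv
      -- the corresponding vector in `R^{m+1}` is unimodular
      set c : Fin (m + 1) → R := Fin.snoc v.1 v.2 with hc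
      have hcuni : IsUnimodular R c := by
        refine ⟨(LinearMap.snd Rᵐᵒᵖ (C × (Fin k → R)) R).comp
          (E.symm.toLinearMap.comp (snocLinearEquiv R m).toLinearMap), ?_⟩
        have h1 : (snocLinearEquiv R m) c = v := by
          rw [hc]
          show ((snocLinearEquiv R m) (Fin.snoc v.1 v.2)) = v
          exact (snocLinearEquiv R m).apply_symm_apply v
        simp only [LinearMap.comp_apply, LinearEquiv.coe_coe, h1, hv,
          E.symm_apply_apply]
        rfl
      obtain ⟨b, w, hw⟩ := hSR m hrm c hcuni
      -- the three shears
      set β₁ : ((Fin m → R) × R) ≃ₗ[Rᵐᵒᵖ] ((Fin m → R) × R) :=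
        shearFst (bMulLinear R b) with hβ₁
      set γ : ((Fin m → R) × R) ≃ₗ[Rᵐᵒᵖ] ((Fin m → R) × R) :=
        shearSnd ((leftMulLinear R (1 - v.2)).comp w) with hγ
      set β₂ : ((Fin m → R) × R) ≃ₗ[Rᵐᵒᵖ] ((Fin m → R) × R) :=
        shearFst (bMulLinear R (fun i => -(c i.castSucc + b i * c (Fin.last m)))) with hβ₂
      set E' := ((E.trans β₁).trans γ).trans β₂ with hE'
      have hc1 : ∀ i : Fin m, c i.castSucc = v.1 i := by
        intro i; simp only [hc, Fin.snoc_castSucc]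
      have hc2 : c (Fin.last m) = v.2 := by simp only [hc, Fin.snoc_last]
      have step1 : β₁ v = ((fun i => c i.castSucc + b i * c (Fin.last m)), v.2) := by
        rw [hβ₁, shearFst_apply]
        ext
        · simp [hc1, hc2]
        · rfl
      have step2 : γ ((fun i => c i.castSucc + b i * c (Fin.last m)), v.2)
          = ((fun i => c i.castSucc + b i * c (Fin.last m)), 1) := by
        rw [hγ, shearSnd_apply]
        ext
        · rfl
        · show v.2 + (leftMulLinear R (1 - v.2) ∘ₗ w)
            (fun i => c i.castSucc + b i * c (Fin.last m)) = 1
          rw [LinearMap.comp_apply, hw, leftMulLinear_apply, mul_one]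
          abel
      have step3 : β₂ ((fun i => c i.castSucc + b i * c (Fin.last m)), 1) = (0, 1) := by
        rw [hβ₂, shearFst_apply]
        ext
        · simp
        · rfl
      have hE'01 : E' (0, 1) = (0, 1) := by
        rw [hE']
        simp only [LinearEquiv.trans_apply, ← hv, step1, step2, step3]
      obtain ⟨F⟩ : Nonempty (C ≃ₗ[Rᵐᵒᵖ] (Fin (m - k) → R)) :=
        ih m C (by push_cast at hk ⊢; omega) (prodCancel R E' hE'01)
      have : m + 1 - (k + 1) = m - k := Nat.succ_sub_succ m k
      rw [this]
      exact ⟨F⟩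

end Aux

/-- If `R` satisfies `(SR_r)` and `C` is a right `R`-module with `C ⊕ Rᵏ ≅ Rⁿ` and
`k ≤ n - r + 1`, then `C ≅ R^{n-k}`. -/
theorem stablyFree_is_free (R : Type) [Ring R] (r n k : ℕ) (hSR : SatisfiesSR R r)
    (C : Type) [AddCommGroup C] [Module Rᵐᵒᵖ C]
    (hk : (k : ℤ) ≤ (n : ℤ) - (r : ℤ) + 1)
    (e : (C × (Fin k → R)) ≃ₗ[Rᵐᵒᵖ] (Fin n → R)) :
    Nonempty (C ≃ₗ[Rᵐᵒᵖ] (Fin (n - k) → R)) := by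
  exact stablyFree_aux R r hSR k n C hk e
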